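/- Let G be a finite group, S ∈ Syl_p(G), and S₀ a normal subgroup of S. Suppose φ ∈ Aut(G) satisfies φ(S₀) = S₀ and φ|_{S₀} normalizes Aut_S(S₀) inside Aut(S₀). Then there exists φ' ∈ Aut(G) with φ'|_{S₀} = φ|_{S₀}, φ'(S) = S, and φ' ≡ φ modulo Inn(G). -/

import Mathlib

open Pointwise

lemma mulAut_smul_eq_map {G : Type*} [Group G] (f : MulAut G) (K : Subgroup G) :
    f • K = Subgroup.map f.toMonoidHom K := by
  ext x
  rw [Subgroup.mem_pointwise_smul_iff_inv_smul_mem, Subgroup.mem_map]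
  constructor
  · intro h; exact ⟨f⁻¹ • x, h, by simp [MulAut.smul_def]⟩
  · rintro ⟨y, hy, rfl⟩; simpa [MulAut.smul_def] using hy



/-- Let `G` be a finite group, `S ∈ Syl_p(G)`, and `S₀ ⊴ S`.  If `φ ∈ Aut(G)` satisfies
`φ(S₀) = S₀` and `φ|_{S₀}` normalizes `Aut_S(S₀)` inside `Aut(S₀)`, then there is
`φ' ∈ Aut(G)` with `φ'|_{S₀} = φ|_{S₀}`, `φ'(S) = S`, and `φ' ≡ φ (mod Inn(G))`. -/
theorem stmt_10 (p : ℕ) [Fact p.Prime] (G : Type*) [Group G] [Finite G]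
    (S : Sylow p G) (S₀ : Subgroup G) (hS₀S : S₀ ≤ (S : Subgroup G))
    (hS₀n : ∀ s ∈ (S : Subgroup G), ∀ x ∈ S₀, s * x * s⁻¹ ∈ S₀)
    (φ : MulAut G) (hφS₀ : Subgroup.map φ.toMonoidHom S₀ = S₀)
    -- `φ|_{S₀} ∘ c_s ∘ (φ|_{S₀})⁻¹ ∈ Aut_S(S₀)` for all `s ∈ S` …
    (hnorm₁ : ∀ s ∈ (S : Subgroup G), ∃ s' ∈ (S : Subgroup G),
      ∀ x ∈ S₀, φ (s * x * s⁻¹) = s' * φ x * s'⁻¹)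
    -- … and conjugation by `φ|_{S₀}` maps `Aut_S(S₀)` onto `Aut_S(S₀)`:
    (hnorm₂ : ∀ s' ∈ (S : Subgroup G), ∃ s ∈ (S : Subgroup G),
      ∀ x ∈ S₀, φ (s * x * s⁻¹) = s' * φ x * s'⁻¹) :
    ∃ φ' : MulAut G, (∀ x ∈ S₀, φ' x = φ x) ∧
      Subgroup.map φ'.toMonoidHom (S : Subgroup G) = (S : Subgroup G) ∧
      ∃ g : G, ∀ x : G, φ' x = g * φ x * g⁻¹ := by
  classical
  set C : Subgroup G := Subgroup.centralizer (S₀ : Set G) with hCdef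
  -- S normalizes C
  have hC : ∀ s ∈ (S : Subgroup G), ∀ c ∈ C, s * c * s⁻¹ ∈ C := by
    intro s hs c hc
    rw [Subgroup.mem_centralizer_iff]
    intro y hy
    have hy' : s⁻¹ * y * s ∈ S₀ := by
      have := hS₀n s⁻¹ (inv_mem hs) y hy
      simpa using this
    have hcy : (s⁻¹ * y * s) * c = c * (s⁻¹ * y * s) :=
      Subgroup.mem_centralizer_iff.mp hc _ hy'
    have := congrArg (fun z => s * z * s⁻¹) hcy
    calc y * (s * c * s⁻¹) = s * ((s⁻¹ * y * s) * c) * s⁻¹ := by group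
      _ = s * (c * (s⁻¹ * y * s)) * s⁻¹ := by rw [hcy]
      _ = (s * c * s⁻¹) * y := by group
  -- the subgroup H = S * C
  let H : Subgroup G :=
    { carrier := {x | ∃ s ∈ (S : Subgroup G), ∃ c ∈ C, x = s * c}
      one_mem' := ⟨1, one_mem _, 1, one_mem _, (one_mul 1).symm⟩
      mul_mem' := by
        rintro a b ⟨s1, hs1, c1, hc1, rfl⟩ ⟨s2, hs2, c2, hc2, rfl⟩
        refine ⟨s1 * s2, mul_mem hs1 hs2, (s2⁻¹ * c1 * s2) * c2,
          mul_mem (by simpa using hC s2⁻¹ (inv_mem hs2) c1 hc1) hc2, by group⟩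
      inv_mem' := by
        rintro a ⟨s, hs, c, hc, rfl⟩
        exact ⟨s⁻¹, inv_mem hs, s * c⁻¹ * s⁻¹, hC s hs c⁻¹ (inv_mem hc), by group⟩ }
  have hSH : (S : Subgroup G) ≤ H := fun s hs => ⟨s, hs, 1, one_mem _, (mul_one s).symm⟩
  -- φ(S) ≤ H
  have hQH : ((φ • S : Sylow p G) : Subgroup G) ≤ H := by
    rw [Sylow.pointwise_smul_def]
    intro x hx
    rw [Subgroup.mem_pointwise_smul_iff_inv_smul_mem] at hx
    obtain ⟨s', hs', hspec⟩ := hnorm₁ (φ⁻¹ • x) hx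
    have hxeq : x = φ (φ⁻¹ • x) := by simp [MulAut.smul_def]
    set s : G := φ⁻¹ • x with hsdef
    refine ⟨s', hs', s'⁻¹ * φ s, ?_, by rw [hxeq]; group⟩
    rw [Subgroup.mem_centralizer_iff]
    intro y hy
    obtain ⟨z, hz, rfl⟩ : ∃ z ∈ S₀, φ z = y := by
      have : y ∈ Subgroup.map φ.toMonoidHom S₀ := by rw [hφS₀]; exact hy
      obtain ⟨z, hz, hzy⟩ := this
      exact ⟨z, hz, hzy⟩
    have key : φ s * φ z * (φ s)⁻¹ = s' * φ z * s'⁻¹ := by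
      have := hspec z hz
      rw [map_mul, map_mul, map_inv] at this
      exact this
    calc φ z * (s'⁻¹ * φ s) = s'⁻¹ * (s' * φ z * s'⁻¹) * φ s := by group
      _ = s'⁻¹ * (φ s * φ z * (φ s)⁻¹) * φ s := by rw [key]
      _ = (s'⁻¹ * φ s) * φ z := by group
  -- Sylow conjugacy inside H
  obtain ⟨g, hg⟩ := MulAction.exists_smul_eq H ((φ • S).subtype hQH) (S.subtype hSH)
  rw [Sylow.smul_subtype] at hg
  replace hg := Sylow.subtype_injective hg
  rw [Subgroup.smul_def] at hg
  obtain ⟨s, hs, c, hc, hgsc⟩ := g.2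
  -- c • (φ • S) = S
  have hcS : (c : G) • (φ • S) = S := by
    have h1 : (s⁻¹ : G) • ((g : G) • (φ • S)) = (c : G) • (φ • S) := by
      rw [smul_smul, hgsc]
      congr 1
      group
    rw [hg] at h1
    rw [← h1]
    exact Sylow.smul_eq_iff_mem_normalizer.mpr (Subgroup.le_normalizer (inv_mem hs))
  -- pass to subgroups
  have hcoe : (MulAut.conj c * φ) • (S : Subgroup G) = (S : Subgroup G) := by
    have := congrArg (fun P : Sylow p G => (P : Subgroup G)) hcS
    rw [Sylow.coe_subgroup_smul, Sylow.pointwise_smul_def] at this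
    rw [mul_smul]
    exact this
  refine ⟨MulAut.conj c * φ, ?_, ?_, c, fun x => rfl⟩
  · intro x hx
    have hφx : φ x ∈ S₀ := by rw [← hφS₀]; exact Subgroup.mem_map.mpr ⟨x, hx, rfl⟩
    have := Subgroup.mem_centralizer_iff.mp hc (φ x) hφx
    show c * φ x * c⁻¹ = φ x
    rw [← this]
    group
  · rw [← mulAut_smul_eq_map, hcoe]
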